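/- Let μ be a Borel probability measure on ℝ^{m+1}₊ with finite first moment whose expectation m(μ) has all coordinates strictly positive, and let X₁, X₂, … be i.i.d. random variables with distribution μ. Then with probability 1 the generalized Gini index G(Z(μ̂_N)) of the empirical measure μ̂_N = (1/N) Σ_{i=1}^N δ_{X_i} is well defined for all sufficiently large N and converges to G(Z(μ)) as N → ∞. -/

import Mathlib

open MeasureTheory Pointwise Filter Topology ProbabilityTheory
open scoped RealInnerProductSpace

/-- The zonoid of a Borel measure. -/
noncomputable def zonoid {n : ℕ} (μ : Measure (EuclideanSpace ℝ (Fin n))) :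
    Set (EuclideanSpace ℝ (Fin n)) :=
  {z | ∃ φ : EuclideanSpace ℝ (Fin n) → ℝ, Measurable φ ∧
    (∀ x, φ x ∈ Set.Icc (0 : ℝ) 1) ∧ z = ∫ x, φ x • x ∂μ}

/-- The non-negative octant. -/
def octant (n : ℕ) : Set (EuclideanSpace ℝ (Fin n)) := {x | ∀ i, 0 ≤ x i}

/-- The box (parallelotope) with opposite vertices `0` and `v`. -/
def parbox {n : ℕ} (v : EuclideanSpace ℝ (Fin n)) : Set (EuclideanSpace ℝ (Fin n)) :=
  {z | ∀ j, 0 ≤ z j ∧ z j ≤ v j}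

/-- The empirical measure of the first `N` samples. -/
noncomputable def empiricalMeasure {n : ℕ} (x : ℕ → EuclideanSpace ℝ (Fin n)) (N : ℕ) :
    Measure (EuclideanSpace ℝ (Fin n)) :=
  ((N : ENNReal))⁻¹ • ∑ i ∈ Finset.range N, Measure.dirac (x i)

/-- The generalized Gini index of a measure. -/
noncomputable def gini {n : ℕ} (μ : Measure (EuclideanSpace ℝ (Fin n))) : ℝ :=
  (MeasureTheory.volume (zonoid μ)).toReal /
    (MeasureTheory.volume (parbox (∫ x, x ∂μ))).toReal

namespace GiniAux

variable {n : ℕ} {ν : Measure (EuclideanSpace ℝ (Fin n))}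


variable {n : ℕ} {ν : Measure (EuclideanSpace ℝ (Fin n))}

/-- Support function of the zonoid. -/
noncomputable def suppF (ν : Measure (EuclideanSpace ℝ (Fin n)))
    (u : EuclideanSpace ℝ (Fin n)) : ℝ :=
  ∫ x, max ⟪u, x⟫ 0 ∂ν

lemma integrable_phi_smul (hν : Integrable (fun x => x) ν)
    {φ : EuclideanSpace ℝ (Fin n) → ℝ} (hφm : Measurable φ)
    (hφ : ∀ x, φ x ∈ Set.Icc (0 : ℝ) 1) :
    Integrable (fun x => φ x • x) ν := by
  refine hν.norm.mono' ?_ (Filter.Eventually.of_forall fun x => ?_)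
  · exact (hφm.stronglyMeasurable.smul stronglyMeasurable_id).aestronglyMeasurable
  · rw [norm_smul]
    have h1 : |φ x| ≤ 1 := by
      rw [abs_le]; exact ⟨le_trans (by norm_num) (hφ x).1, (hφ x).2⟩
    calc ‖φ x‖ * ‖x‖ ≤ 1 * ‖x‖ := by
          apply mul_le_mul_of_nonneg_right _ (norm_nonneg _)
          simpa using h1
      _ = ‖x‖ := one_mul _

lemma integrable_posInner (hν : Integrable (fun x => x) ν)
    (u : EuclideanSpace ℝ (Fin n)) :
    Integrable (fun x => max ⟪u, x⟫ 0) ν := by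
  refine (hν.norm.const_mul ‖u‖).mono' ?_ (Filter.Eventually.of_forall fun x => ?_)
  · exact (continuous_const.inner continuous_id).max continuous_const |>.aestronglyMeasurable
  · have h2 : |⟪u, x⟫| ≤ ‖u‖ * ‖x‖ := abs_real_inner_le_norm u x
    have : |max ⟪u, x⟫ 0| ≤ |⟪u, x⟫| := by
      rcases le_or_gt ⟪u, x⟫ 0 with h | h
      · rw [max_eq_right h]; simp
      · rw [max_eq_left h.le]
    simpa using this.trans h2

lemma integrable_mul_inner (hν : Integrable (fun x => x) ν)
    {φ : EuclideanSpace ℝ (Fin n) → ℝ} (hφm : Measurable φ)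
    (hφ : ∀ x, φ x ∈ Set.Icc (0 : ℝ) 1) (u : EuclideanSpace ℝ (Fin n)) :
    Integrable (fun x => φ x * ⟪u, x⟫) ν := by
  refine (hν.norm.const_mul ‖u‖).mono' ?_ (Filter.Eventually.of_forall fun x => ?_)
  · exact (hφm.stronglyMeasurable.mul
      (continuous_const.inner continuous_id).stronglyMeasurable).aestronglyMeasurable
  · have h1 : |φ x| ≤ 1 := by
      rw [abs_le]; exact ⟨le_trans (by norm_num) (hφ x).1, (hφ x).2⟩
    have h2 : |⟪u, x⟫| ≤ ‖u‖ * ‖x‖ := abs_real_inner_le_norm u x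
    calc ‖φ x * ⟪u, x⟫‖ = |φ x| * |⟪u, x⟫| := abs_mul _ _
      _ ≤ 1 * (‖u‖ * ‖x‖) := by
          apply mul_le_mul h1 h2 (abs_nonneg _) zero_le_one
      _ = ‖u‖ * ‖x‖ := one_mul _

lemma inner_le_suppF (hν : Integrable (fun x => x) ν)
    {z : EuclideanSpace ℝ (Fin n)} (hz : z ∈ zonoid ν) (u : EuclideanSpace ℝ (Fin n)) :
    ⟪u, z⟫ ≤ suppF ν u := by
  obtain ⟨φ, hφm, hφ, rfl⟩ := hz
  rw [← integral_inner (integrable_phi_smul hν hφm hφ) u]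
  have heq : ∀ x, ⟪u, φ x • x⟫ = φ x * ⟪u, x⟫ := fun x => real_inner_smul_right u x (φ x)
  simp_rw [heq]
  refine integral_mono (integrable_mul_inner hν hφm hφ u) (integrable_posInner hν u) fun x => ?_
  rcases le_or_gt ⟪u, x⟫ 0 with h | h
  · calc φ x * ⟪u, x⟫ ≤ 0 := mul_nonpos_of_nonneg_of_nonpos (hφ x).1 h
      _ ≤ max ⟪u, x⟫ 0 := le_max_right _ _
  · calc φ x * ⟪u, x⟫ ≤ 1 * ⟪u, x⟫ := mul_le_mul_of_nonneg_right (hφ x).2 h.le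
      _ = ⟪u, x⟫ := one_mul _
      _ ≤ max ⟪u, x⟫ 0 := le_max_left _ _

lemma exists_mem_zonoid_inner_eq (hν : Integrable (fun x => x) ν)
    (u : EuclideanSpace ℝ (Fin n)) :
    ∃ z ∈ zonoid ν, ⟪u, z⟫ = suppF ν u := by
  classical
  set φ : EuclideanSpace ℝ (Fin n) → ℝ := fun x => if 0 < ⟪u, x⟫ then 1 else 0 with hφdef
  have hφm : Measurable φ := by
    apply Measurable.ite _ measurable_const measurable_const
    exact measurableSet_lt measurable_const (continuous_const.inner continuous_id).measurable
  have hφ : ∀ x, φ x ∈ Set.Icc (0 : ℝ) 1 := fun x => by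
    constructor
    · show (0:ℝ) ≤ if 0 < ⟪u, x⟫ then 1 else 0
      split <;> norm_num
    · show (if 0 < ⟪u, x⟫ then (1:ℝ) else 0) ≤ 1
      split <;> norm_num
  refine ⟨∫ x, φ x • x ∂ν, ⟨φ, hφm, hφ, rfl⟩, ?_⟩
  rw [← integral_inner (integrable_phi_smul hν hφm hφ) u]
  apply integral_congr_ae
  filter_upwards with x
  rw [real_inner_smul_right]
  show (if 0 < ⟪u, x⟫ then (1:ℝ) else 0) * ⟪u, x⟫ = max ⟪u, x⟫ 0
  by_cases h : 0 < ⟪u, x⟫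
  · rw [if_pos h, one_mul, max_eq_left h.le]
  · rw [if_neg h, zero_mul, max_eq_right (not_lt.1 h)]


variable {n : ℕ} {ν : Measure (EuclideanSpace ℝ (Fin n))}

lemma zero_mem_zonoid (ν : Measure (EuclideanSpace ℝ (Fin n))) : 0 ∈ zonoid ν := by
  refine ⟨fun _ => 0, measurable_const, fun x => by norm_num, ?_⟩
  simp

lemma zonoid_convex (hν : Integrable (fun x => x) ν) : Convex ℝ (zonoid ν) := by
  rintro z₁ ⟨φ₁, hm₁, hb₁, rfl⟩ z₂ ⟨φ₂, hm₂, hb₂, rfl⟩ a b ha hb hab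
  refine ⟨fun x => a * φ₁ x + b * φ₂ x, (hm₁.const_mul a).add (hm₂.const_mul b), fun x => ?_, ?_⟩
  · constructor
    · exact add_nonneg (mul_nonneg ha (hb₁ x).1) (mul_nonneg hb (hb₂ x).1)
    · calc a * φ₁ x + b * φ₂ x ≤ a * 1 + b * 1 :=
          add_le_add (mul_le_mul_of_nonneg_left (hb₁ x).2 ha)
            (mul_le_mul_of_nonneg_left (hb₂ x).2 hb)
        _ = 1 := by rw [mul_one, mul_one, hab]
  · have h1 : ∀ x, (a * φ₁ x + b * φ₂ x) • x = a • (φ₁ x • x) + b • (φ₂ x • x) := by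
      intro x
      rw [add_smul, mul_smul, mul_smul]
    simp_rw [h1]
    have h2 := integral_add (μ := ν) (f := fun x => a • (φ₁ x • x)) (g := fun x => b • (φ₂ x • x))
      ((integrable_phi_smul hν hm₁ hb₁).smul a) ((integrable_phi_smul hν hm₂ hb₂).smul b)
    rw [h2, integral_smul, integral_smul]

lemma norm_le_of_mem_zonoid (hν : Integrable (fun x => x) ν)
    {z : EuclideanSpace ℝ (Fin n)} (hz : z ∈ zonoid ν) : ‖z‖ ≤ ∫ x, ‖x‖ ∂ν := by
  obtain ⟨φ, hφm, hφ, rfl⟩ := hz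
  calc ‖∫ x, φ x • x ∂ν‖ ≤ ∫ x, ‖φ x • x‖ ∂ν := norm_integral_le_integral_norm _
    _ ≤ ∫ x, ‖x‖ ∂ν := by
        refine integral_mono (integrable_phi_smul hν hφm hφ).norm hν.norm fun x => ?_
        rw [norm_smul]
        have h1 : ‖φ x‖ ≤ 1 := by
          rw [Real.norm_eq_abs, abs_le]
          exact ⟨le_trans (by norm_num) (hφ x).1, (hφ x).2⟩
        calc ‖φ x‖ * ‖x‖ ≤ 1 * ‖x‖ := mul_le_mul_of_nonneg_right h1 (norm_nonneg _)
          _ = ‖x‖ := one_mul _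

lemma zonoid_isBounded (hν : Integrable (fun x => x) ν) :
    Bornology.IsBounded (zonoid ν) :=
  isBounded_iff_forall_norm_le.2 ⟨_, fun _ hz => norm_le_of_mem_zonoid hν hz⟩

lemma abs_suppF_sub_le (hν : Integrable (fun x => x) ν)
    (u v : EuclideanSpace ℝ (Fin n)) :
    |suppF ν u - suppF ν v| ≤ ‖u - v‖ * ∫ x, ‖x‖ ∂ν := by
  have key : suppF ν u - suppF ν v = ∫ x, (max ⟪u, x⟫ 0 - max ⟪v, x⟫ 0) ∂ν := by
    rw [integral_sub (integrable_posInner hν u) (integrable_posInner hν v)]; rfl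
  rw [key]
  calc |∫ x, (max ⟪u, x⟫ 0 - max ⟪v, x⟫ 0) ∂ν| ≤ ∫ x, |max ⟪u, x⟫ 0 - max ⟪v, x⟫ 0| ∂ν := by
        simpa [Real.norm_eq_abs] using
          norm_integral_le_integral_norm (μ := ν) (f := fun x => max ⟪u, x⟫ 0 - max ⟪v, x⟫ 0)
    _ ≤ ∫ x, ‖u - v‖ * ‖x‖ ∂ν := by
        refine integral_mono ((integrable_posInner hν u).sub (integrable_posInner hν v)).abs
          (hν.norm.const_mul _) fun x => ?_
        have h1 : |max ⟪u, x⟫ 0 - max ⟪v, x⟫ 0| ≤ |⟪u, x⟫ - ⟪v, x⟫| := by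
          exact abs_max_sub_max_le_abs _ _ _
        have h2 : ⟪u, x⟫ - ⟪v, x⟫ = ⟪u - v, x⟫ := (inner_sub_left u v x).symm
        rw [h2] at h1
        exact h1.trans (abs_real_inner_le_norm _ _)
    _ = ‖u - v‖ * ∫ x, ‖x‖ ∂ν := integral_const_mul _ _

lemma suppF_smul (ν : Measure (EuclideanSpace ℝ (Fin n))) {c : ℝ} (hc : 0 ≤ c)
    (u : EuclideanSpace ℝ (Fin n)) : suppF ν (c • u) = c * suppF ν u := by
  unfold suppF
  rw [← integral_const_mul]
  congr 1
  funext x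
  rw [real_inner_smul_left]
  rw [max_comm, max_comm (⟪u,x⟫) 0, mul_max_of_nonneg _ _ hc, mul_zero]

lemma suppF_zero (ν : Measure (EuclideanSpace ℝ (Fin n))) : suppF ν 0 = 0 := by
  unfold suppF
  have : ∀ x : EuclideanSpace ℝ (Fin n), max ⟪(0:EuclideanSpace ℝ (Fin n)), x⟫ 0 = 0 := by
    intro x
    rw [inner_zero_left, max_self]
  simp_rw [this, integral_zero]


variable {n : ℕ}

/-- Separation: if every inner product on `K` is dominated by `f`, and `f` is dominated on
every direction by some element of the closed convex set `C`, then `K ⊆ C`. -/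
lemma subset_of_inner_le {K C : Set (EuclideanSpace ℝ (Fin n))}
    {f : EuclideanSpace ℝ (Fin n) → ℝ} (hC : Convex ℝ C) (hCc : IsClosed C)
    (hfC : ∀ u, ∃ y ∈ C, f u ≤ ⟪u, y⟫)
    (hK : ∀ z ∈ K, ∀ u, ⟪u, z⟫ ≤ f u) : K ⊆ C := by
  intro z hz
  by_contra hzC
  obtain ⟨g, s, hgC, hgz⟩ := geometric_hahn_banach_closed_point hC hCc hzC
  set u := (InnerProductSpace.toDual ℝ (EuclideanSpace ℝ (Fin n))).symm g with hu
  have hiu : ∀ w, ⟪u, w⟫ = g w := fun w => InnerProductSpace.toDual_symm_apply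
  obtain ⟨y, hyC, hfy⟩ := hfC u
  have h1 := hK z hz u
  rw [hiu] at h1
  have h2 := hgC y hyC
  rw [← hiu] at h2
  linarith [hgz]

/-- The volume of the closure of a convex set equals the volume of the set. -/
lemma volume_closure_of_convex {s : Set (EuclideanSpace ℝ (Fin n))} (hs : Convex ℝ s) :
    volume (closure s) = volume s := by
  rcases (interior s).eq_empty_or_nonempty with hi | ⟨y, hy⟩
  · rcases s.eq_empty_or_nonempty with rfl | hne
    · simp
    · have hspan : affineSpan ℝ s ≠ ⊤ := by
        intro htop
        rw [← hs.interior_nonempty_iff_affineSpan_eq_top] at htop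
        rw [hi] at htop
        exact Set.not_nonempty_empty htop
      have h1 : closure s ⊆ (affineSpan ℝ s : Set (EuclideanSpace ℝ (Fin n))) := by
        apply closure_minimal (subset_affineSpan ℝ s)
        exact AffineSubspace.closed_of_finiteDimensional _
      have h2 : volume (closure s) = 0 := by
        apply le_antisymm _ (zero_le)
        calc volume (closure s) ≤ volume (affineSpan ℝ s : Set (EuclideanSpace ℝ (Fin n))) :=
            measure_mono h1
          _ = 0 := Measure.addHaar_affineSubspace volume _ hspan
      rw [h2]
      apply le_antisymm (zero_le)
      rw [← h2]
      exact measure_mono subset_closure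
  · apply le_antisymm _ (measure_mono subset_closure)
    have key : interior (closure s) ⊆ interior s := by
      intro x hx
      rcases eq_or_ne x y with rfl | hxy
      · exact hy
      obtain ⟨ε, hε, hball⟩ := Metric.isOpen_iff.1 isOpen_interior x hx
      set d := ‖x - y‖ with hd
      have hd0 : 0 < d := by
        rw [hd, norm_pos_iff, sub_ne_zero]
        exact hxy
      set t := min 1 (ε / (2 * d)) with ht
      have ht0 : 0 < t := lt_min one_pos (by positivity)
      set z := x + t • (x - y) with hz
      have hzball : z ∈ Metric.ball x ε := by
        rw [Metric.mem_ball, dist_eq_norm, hz]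
        have : x + t • (x - y) - x = t • (x - y) := by abel
        rw [this, norm_smul, Real.norm_eq_abs, abs_of_pos ht0]
        calc t * ‖x - y‖ ≤ ε / (2 * d) * d := by
              apply mul_le_mul (min_le_right _ _) le_rfl (norm_nonneg _) (by positivity)
          _ = ε / 2 := by field_simp
          _ < ε := by linarith
      have hzcl : z ∈ closure s := interior_subset (hball hzball)
      have hcombo : (t / (1 + t)) • y + (1 / (1 + t)) • z = x := by
        rw [hz]
        have h1t : (1 : ℝ) + t ≠ 0 := by positivity
        match_scalars <;> field_simp <;> ring
      have := Convex.combo_interior_closure_subset_interior hs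
        (a := t / (1 + t)) (b := 1 / (1 + t)) (by positivity) (by positivity)
        (by field_simp; ring)
      apply this
      rw [← hcombo]
      exact Set.add_mem_add (Set.smul_mem_smul_set hy) (Set.smul_mem_smul_set hzcl)
    calc volume (closure s)
        ≤ volume (interior (closure s) ∪ frontier (closure s)) := by
          apply measure_mono
          intro w hw
          rcases em (w ∈ interior (closure s)) with h | h
          · exact Or.inl h
          · right
            rw [frontier, closure_closure]
            exact ⟨hw, h⟩
      _ ≤ volume (interior (closure s)) + volume (frontier (closure s)) := measure_union_le _ _
      _ = volume (interior (closure s)) := by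
          rw [Convex.addHaar_frontier volume hs.closure, add_zero]
      _ ≤ volume s := measure_mono (key.trans interior_subset)


variable {n : ℕ}

lemma integrable_dirac {F : Type*} [NormedAddCommGroup F]
    {f : EuclideanSpace ℝ (Fin n) → F} (hf : StronglyMeasurable f)
    (a : EuclideanSpace ℝ (Fin n)) : Integrable f (Measure.dirac a) := by
  refine ⟨hf.aestronglyMeasurable, ?_⟩
  rw [HasFiniteIntegral, lintegral_dirac]
  exact ENNReal.coe_lt_top

lemma empirical_integral {F : Type*} [NormedAddCommGroup F] [NormedSpace ℝ F] [CompleteSpace F]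
    (xs : ℕ → EuclideanSpace ℝ (Fin n)) (N : ℕ)
    {f : EuclideanSpace ℝ (Fin n) → F} (hf : StronglyMeasurable f) :
    ∫ x, f x ∂(empiricalMeasure xs N) = (N : ℝ)⁻¹ • ∑ i ∈ Finset.range N, f (xs i) := by
  rw [empiricalMeasure, integral_smul_measure,
    integral_finset_sum_measure (fun i _ => integrable_dirac hf (xs i))]
  congr 1
  · rw [ENNReal.toReal_inv, ENNReal.toReal_natCast]
  · exact Finset.sum_congr rfl fun i _ => integral_dirac f (xs i)

lemma empirical_integrable {F : Type*} [NormedAddCommGroup F]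
    (xs : ℕ → EuclideanSpace ℝ (Fin n)) {N : ℕ} (hN : N ≠ 0)
    {f : EuclideanSpace ℝ (Fin n) → F} (hf : StronglyMeasurable f) :
    Integrable f (empiricalMeasure xs N) := by
  rw [empiricalMeasure]
  apply Integrable.smul_measure
  · rw [integrable_finset_sum_measure]
    exact fun i _ => integrable_dirac hf (xs i)
  · simp [hN]

lemma volume_parbox (v : EuclideanSpace ℝ (Fin n)) :
    volume (parbox v) = ∏ j, ENNReal.ofReal (v j) := by
  have hset : parbox v =
      (MeasurableEquiv.toLp 2 (Fin n → ℝ)).symm ⁻¹' (Set.univ.pi fun j => Set.Icc 0 (v j)) := by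
    ext x
    simp only [parbox, Set.mem_preimage, Set.mem_pi, Set.mem_univ, forall_true_left,
      Set.mem_Icc, Set.mem_setOf_eq]
    rfl
  rw [hset, MeasurePreserving.measure_preimage
    (EuclideanSpace.volume_preserving_symm_measurableEquiv_toLp (Fin n))
    ((MeasurableSet.univ_pi fun j => measurableSet_Icc).nullMeasurableSet)]
  rw [volume_pi_pi]
  exact Finset.prod_congr rfl fun j _ => by rw [Real.volume_Icc, sub_zero]

lemma volume_parbox_toReal (v : EuclideanSpace ℝ (Fin n)) :
    (volume (parbox v)).toReal = ∏ j, max (v j) 0 := by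
  rw [volume_parbox, ENNReal.toReal_prod]
  exact Finset.prod_congr rfl fun j _ => by rw [ENNReal.toReal_ofReal']


set_option maxHeartbeats 1000000 in
lemma main_det {n : ℕ} (μ : Measure (EuclideanSpace ℝ (Fin n))) [IsProbabilityMeasure μ]
    (hμint : Integrable (fun x => x) μ)
    (xs : ℕ → EuclideanSpace ℝ (Fin n))
    (hmean : Tendsto (fun N : ℕ => (N : ℝ)⁻¹ • ∑ i ∈ Finset.range N, xs i) atTop
      (𝓝 (∫ x, x ∂μ)))
    (hnorm : Tendsto (fun N : ℕ => (N : ℝ)⁻¹ • ∑ i ∈ Finset.range N, ‖xs i‖) atTop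
      (𝓝 (∫ x, ‖x‖ ∂μ)))
    (u : ℕ → EuclideanSpace ℝ (Fin n)) (hu : DenseRange u)
    (hsuppc : ∀ k, Tendsto (fun N : ℕ => (N : ℝ)⁻¹ • ∑ i ∈ Finset.range N, max ⟪u k, xs i⟫ 0)
      atTop (𝓝 (suppF μ (u k))))
    (hpos : ∀ j, 0 < (∫ x, x ∂μ) j) :
    (∃ N₀, ∀ N ≥ N₀, volume (parbox (∫ x, x ∂(empiricalMeasure xs N))) ≠ 0) ∧
      Tendsto (fun N => gini (empiricalMeasure xs N)) atTop (𝓝 (gini μ)) := by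
  classical
  have hsm_id : StronglyMeasurable (fun x : EuclideanSpace ℝ (Fin n) => x) :=
    stronglyMeasurable_id
  have hsm_norm : StronglyMeasurable (fun x : EuclideanSpace ℝ (Fin n) => ‖x‖) :=
    continuous_norm.stronglyMeasurable
  have hsm_pos : ∀ v : EuclideanSpace ℝ (Fin n),
      StronglyMeasurable (fun x : EuclideanSpace ℝ (Fin n) => max ⟪v, x⟫ 0) := fun v =>
    ((continuous_const.inner continuous_id).max continuous_const).stronglyMeasurable
  have hmeanE : ∀ N, ∫ x, x ∂(empiricalMeasure xs N)
      = (N : ℝ)⁻¹ • ∑ i ∈ Finset.range N, xs i :=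
    fun N => empirical_integral xs N hsm_id
  have hsE : ∀ (N : ℕ) (v : EuclideanSpace ℝ (Fin n)), suppF (empiricalMeasure xs N) v
      = (N : ℝ)⁻¹ • ∑ i ∈ Finset.range N, max ⟪v, xs i⟫ 0 :=
    fun N v => empirical_integral xs N (hsm_pos v)
  have hnormE : ∀ N, (∫ x, ‖x‖ ∂(empiricalMeasure xs N))
      = (N : ℝ)⁻¹ • ∑ i ∈ Finset.range N, ‖xs i‖ :=
    fun N => empirical_integral xs N hsm_norm
  have hint : ∀ {N : ℕ}, N ≠ 0 → Integrable (fun x => x) (empiricalMeasure xs N) :=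
    fun hN => empirical_integrable xs hN hsm_id
  -- denominator
  have hdpos : 0 < ∏ j, max ((∫ x, x ∂μ) j) 0 :=
    Finset.prod_pos fun j _ => lt_of_lt_of_le (hpos j) (le_max_left _ _)
  have hdconv : Tendsto (fun N => (volume (parbox (∫ x, x ∂(empiricalMeasure xs N)))).toReal)
      atTop (𝓝 (∏ j, max ((∫ x, x ∂μ) j) 0)) := by
    have heq : ∀ N, (volume (parbox (∫ x, x ∂(empiricalMeasure xs N)))).toReal
        = ∏ j, max ((∫ x, x ∂(empiricalMeasure xs N)) j) 0 := fun N => volume_parbox_toReal _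
    simp_rw [heq]
    apply tendsto_finset_prod
    intro j _
    apply Tendsto.max _ tendsto_const_nhds
    have hc : Continuous (fun y : EuclideanSpace ℝ (Fin n) => y j) :=
      (EuclideanSpace.proj (𝕜 := ℝ) j).continuous
    have hm : Tendsto (fun N => ∫ x, x ∂(empiricalMeasure xs N)) atTop (𝓝 (∫ x, x ∂μ)) := by
      simp_rw [hmeanE]; exact hmean
    exact (hc.tendsto _).comp hm
  have hdeventually : ∀ᶠ N in atTop,
      volume (parbox (∫ x, x ∂(empiricalMeasure xs N))) ≠ 0 := by
    have h2 := (tendsto_order.1 hdconv).1 ((∏ j, max ((∫ x, x ∂μ) j) 0) / 2) (by linarith)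
    filter_upwards [h2] with N hN h0
    rw [h0, ENNReal.toReal_zero] at hN
    linarith
  -- uniform convergence of support functions
  have hL0 : 0 ≤ ∫ x, ‖x‖ ∂μ := integral_nonneg fun x => norm_nonneg x
  have hsuppc' : ∀ k, Tendsto (fun N => suppF (empiricalMeasure xs N) (u k)) atTop
      (𝓝 (suppF μ (u k))) := by
    intro k
    simp_rw [hsE]
    exact hsuppc k
  have hnorm' : Tendsto (fun N => ∫ x, ‖x‖ ∂(empiricalMeasure xs N)) atTop
      (𝓝 (∫ x, ‖x‖ ∂μ)) := by
    simp_rw [hnormE]; exact hnorm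
  have hunif : ∀ ε : ℝ, 0 < ε → ∀ᶠ N in atTop,
      ∀ v : EuclideanSpace ℝ (Fin n), ‖v‖ ≤ 1 →
        |suppF (empiricalMeasure xs N) v - suppF μ v| ≤ ε := by
    intro ε hε
    set L : ℝ := ∫ x, ‖x‖ ∂μ with hLdef
    set ε' : ℝ := ε / (2 * L + 4) with hε'def
    have hε'pos : 0 < ε' := by
      apply div_pos hε
      linarith
    have hcover : Metric.closedBall (0 : EuclideanSpace ℝ (Fin n)) 1 ⊆
        ⋃ k, Metric.ball (u k) ε' := by
      intro v _
      obtain ⟨k, hk⟩ := hu.exists_dist_lt v hε'pos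
      exact Set.mem_iUnion.2 ⟨k, Metric.mem_ball.2 hk⟩
    obtain ⟨t, ht⟩ := (isCompact_closedBall (0 : EuclideanSpace ℝ (Fin n)) 1).elim_finite_subcover
      (fun k => Metric.ball (u k) ε') (fun k => Metric.isOpen_ball) hcover
    have hE1 : ∀ᶠ N in atTop, ∀ k ∈ t,
        |suppF (empiricalMeasure xs N) (u k) - suppF μ (u k)| < ε' := by
      rw [eventually_all_finset]
      intro k _
      have h3 := Metric.tendsto_nhds.1 (hsuppc' k) ε' hε'pos
      filter_upwards [h3] with N hN
      rwa [Real.dist_eq] at hN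
    have hE2 : ∀ᶠ N in atTop, ∫ x, ‖x‖ ∂(empiricalMeasure xs N) ≤ L + 1 := by
      have h3 := (tendsto_order.1 hnorm').2 (L + 1) (by linarith)
      filter_upwards [h3] with N hN
      linarith
    filter_upwards [hE1, hE2, eventually_ne_atTop 0] with N h1 h2 h0
    intro v hv
    have hvball : v ∈ Metric.closedBall (0 : EuclideanSpace ℝ (Fin n)) 1 := by
      rwa [Metric.mem_closedBall, dist_zero_right]
    obtain ⟨k, hkt, hkv⟩ : ∃ k ∈ t, v ∈ Metric.ball (u k) ε' := by
      have h4 := ht hvball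
      simpa using h4
    have hdistv : ‖v - u k‖ < ε' := by rwa [Metric.mem_ball, dist_eq_norm] at hkv
    have hnn : (0:ℝ) ≤ ‖v - u k‖ := norm_nonneg _
    have hLip1 : |suppF (empiricalMeasure xs N) v - suppF (empiricalMeasure xs N) (u k)|
        ≤ ‖v - u k‖ * (L + 1) := by
      refine (abs_suppF_sub_le (hint h0) v (u k)).trans ?_
      exact mul_le_mul_of_nonneg_left h2 hnn
    have hLip2 : |suppF μ (u k) - suppF μ v| ≤ ‖v - u k‖ * L := by
      have h5 := abs_suppF_sub_le hμint (u k) v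
      rwa [norm_sub_rev] at h5
    have h6 := h1 k hkt
    have htri1 := abs_sub_le (suppF (empiricalMeasure xs N) v)
      (suppF (empiricalMeasure xs N) (u k)) (suppF μ v)
    have htri2 := abs_sub_le (suppF (empiricalMeasure xs N) (u k)) (suppF μ (u k)) (suppF μ v)
    have hfin : |suppF (empiricalMeasure xs N) v - suppF μ v|
        ≤ ε' * (L + 1) + ε' + ε' * L := by
      have b1 : ‖v - u k‖ * (L + 1) ≤ ε' * (L + 1) :=
        mul_le_mul_of_nonneg_right hdistv.le (by linarith)
      have b2 : ‖v - u k‖ * L ≤ ε' * L :=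
        mul_le_mul_of_nonneg_right hdistv.le hL0
      linarith
    have hmul : ε' * (2 * L + 4) = ε := by
      rw [hε'def]
      field_simp
    have hlast : ε' * (L + 1) + ε' + ε' * L ≤ ε := by nlinarith [hε'pos.le, hL0]
    linarith
  -- scaling of the uniform bound to all directions
  have hscale : ∀ (ν' : Measure (EuclideanSpace ℝ (Fin n))) (e : ℝ), 0 ≤ e →
      (∀ w : EuclideanSpace ℝ (Fin n), ‖w‖ ≤ 1 → |suppF ν' w - suppF μ w| ≤ e) →
      ∀ v : EuclideanSpace ℝ (Fin n), |suppF ν' v - suppF μ v| ≤ e * ‖v‖ := by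
    intro ν' e he hb v
    rcases eq_or_ne v 0 with rfl | hv
    · rw [suppF_zero, suppF_zero]
      simp
    · have hnv : 0 < ‖v‖ := norm_pos_iff.2 hv
      set w : EuclideanSpace ℝ (Fin n) := ‖v‖⁻¹ • v with hw
      have hwn : ‖w‖ ≤ 1 := by
        rw [hw, norm_smul, Real.norm_eq_abs, abs_of_pos (by positivity),
          inv_mul_cancel₀ hnv.ne']
      have hvw : v = ‖v‖ • w := by
        rw [hw, smul_smul, mul_inv_cancel₀ hnv.ne', one_smul]
      have h1 : suppF ν' v = ‖v‖ * suppF ν' w := by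
        calc suppF ν' v = suppF ν' (‖v‖ • w) := by rw [← hvw]
          _ = ‖v‖ * suppF ν' w := suppF_smul ν' hnv.le w
      have h2 : suppF μ v = ‖v‖ * suppF μ w := by
        calc suppF μ v = suppF μ (‖v‖ • w) := by rw [← hvw]
          _ = ‖v‖ * suppF μ w := suppF_smul μ hnv.le w
      rw [h1, h2, ← mul_sub, abs_mul, abs_of_pos hnv, mul_comm e ‖v‖]
      exact mul_le_mul_of_nonneg_left (hb w hwn) hnv.le
  -- numerator
  have hZconv : Convex ℝ (zonoid μ) := zonoid_convex hμint
  have hKconv : Convex ℝ (closure (zonoid μ)) := hZconv.closure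
  have hKcomp : IsCompact (closure (zonoid μ)) := (zonoid_isBounded hμint).isCompact_closure
  have hVK : volume (closure (zonoid μ)) = volume (zonoid μ) := volume_closure_of_convex hZconv
  have hVKfin : volume (closure (zonoid μ)) ≠ ⊤ := hKcomp.measure_lt_top.ne
  have hr0 : (0:ℝ) ≤ (volume (zonoid μ)).toReal := ENNReal.toReal_nonneg
  have hKsub : ∀ v : EuclideanSpace ℝ (Fin n), ∀ y ∈ closure (zonoid μ),
      ⟪v, y⟫ ≤ suppF μ v := by
    intro v y hy
    have hclosed : IsClosed {x : EuclideanSpace ℝ (Fin n) | ⟪v, x⟫ ≤ suppF μ v} :=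
      isClosed_le (continuous_const.inner continuous_id) continuous_const
    exact hclosed.closure_subset_iff.2 (fun z hz => inner_le_suppF hμint hz v) hy
  set S : ℕ → Set (EuclideanSpace ℝ (Fin n)) :=
    fun k => closure (zonoid μ) + Metric.closedBall 0 ((k : ℝ) + 1)⁻¹ with hSdef
  have hSpos : ∀ k : ℕ, (0:ℝ) < ((k : ℝ) + 1)⁻¹ := fun k => by positivity
  have hScomp : ∀ k, IsCompact (S k) := fun k => hKcomp.add (isCompact_closedBall _ _)
  have hSconv : ∀ k, Convex ℝ (S k) := fun k => hKconv.add (convex_closedBall _ _)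
  have hSanti : Antitone S := by
    intro k l hkl
    apply Set.add_subset_add_left
    apply Metric.closedBall_subset_closedBall
    have h2 : (k : ℝ) + 1 ≤ (l : ℝ) + 1 := by
      have h3 : (k : ℝ) ≤ (l : ℝ) := Nat.cast_le.2 hkl
      linarith
    exact inv_anti₀ (by positivity) h2
  have hSinter : ⋂ k, S k = closure (zonoid μ) := by
    apply subset_antisymm
    · intro x hx
      rw [← hKcomp.isClosed.closure_eq, Metric.mem_closure_iff]
      intro δ hδ
      obtain ⟨k, hk⟩ := exists_nat_gt δ⁻¹
      have hpos1 : (0:ℝ) < (k : ℝ) + 1 := by positivity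
      have hkδ : ((k : ℝ) + 1)⁻¹ < δ := by
        rw [inv_lt_comm₀ hpos1 hδ] at *
        · linarith
      obtain ⟨y, hy, z, hz, hyz⟩ := Set.mem_add.1 (Set.mem_iInter.1 hx k)
      refine ⟨y, hy, ?_⟩
      rw [dist_eq_norm]
      have hxz : x - y = z := by rw [← hyz]; abel
      rw [hxz]
      calc ‖z‖ ≤ ((k : ℝ) + 1)⁻¹ := by
            rwa [Metric.mem_closedBall, dist_zero_right] at hz
        _ < δ := hkδ
    · intro x hx
      apply Set.mem_iInter.2
      intro k
      exact Set.mem_add.2 ⟨x, hx, 0, Metric.mem_closedBall_self (hSpos k).le, add_zero x⟩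
  have hVS : Tendsto (fun k => (volume (S k)).toReal) atTop
      (𝓝 (volume (zonoid μ)).toReal) := by
    have h1 : Tendsto (fun k => volume (S k)) atTop (𝓝 (volume (closure (zonoid μ)))) := by
      have h2 := tendsto_measure_iInter_atTop (μ := volume)
        (fun k => (hScomp k).isClosed.measurableSet.nullMeasurableSet)
        hSanti ⟨0, (hScomp 0).measure_lt_top.ne⟩
      rwa [hSinter] at h2
    have h3 := (ENNReal.tendsto_toReal hVKfin).comp h1
    rwa [hVK] at h3
  have hrconv : Tendsto (fun N => (volume (zonoid (empiricalMeasure xs N))).toReal) atTop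
      (𝓝 (volume (zonoid μ)).toReal) := by
    rw [Metric.tendsto_nhds]
    intro ε hε
    set r : ℝ := (volume (zonoid μ)).toReal with hrdef
    obtain ⟨k₀, hk₀⟩ : ∃ k₀, (volume (S k₀)).toReal < r + ε/2 :=
      ((tendsto_order.1 hVS).2 (r + ε/2) (by linarith)).exists
    have hε₀pos : (0:ℝ) < ((k₀ : ℝ) + 1)⁻¹ := hSpos k₀
    have hupper : ∀ᶠ N in atTop,
        (volume (zonoid (empiricalMeasure xs N))).toReal < r + ε/2 := by
      filter_upwards [hunif _ hε₀pos, eventually_ne_atTop 0] with N hN h0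
      have hNs := hscale (empiricalMeasure xs N) _ hε₀pos.le hN
      have hsub : zonoid (empiricalMeasure xs N) ⊆ S k₀ := by
        apply subset_of_inner_le (f := fun v => suppF μ v + ((k₀ : ℝ) + 1)⁻¹ * ‖v‖)
          (hSconv k₀) (hScomp k₀).isClosed
        · intro v
          obtain ⟨z, hz, hez⟩ := exists_mem_zonoid_inner_eq hμint v
          rcases eq_or_ne v 0 with rfl | hv
          · refine ⟨z + 0, Set.add_mem_add (subset_closure hz)
              (Metric.mem_closedBall_self hε₀pos.le), ?_⟩
            rw [inner_zero_left, suppF_zero, norm_zero, mul_zero, add_zero]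
          · have hnv : 0 < ‖v‖ := norm_pos_iff.2 hv
            refine ⟨z + (((k₀ : ℝ) + 1)⁻¹ * ‖v‖⁻¹) • v,
              Set.add_mem_add (subset_closure hz) ?_, ?_⟩
            · rw [Metric.mem_closedBall, dist_zero_right, norm_smul, Real.norm_eq_abs,
                abs_of_pos (by positivity), mul_assoc, inv_mul_cancel₀ hnv.ne', mul_one]
            · rw [inner_add_right, real_inner_smul_right, real_inner_self_eq_norm_sq, hez]
              have hid : ((k₀ : ℝ) + 1)⁻¹ * ‖v‖⁻¹ * ‖v‖^2 = ((k₀ : ℝ) + 1)⁻¹ * ‖v‖ := by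
                field_simp
              rw [hid]
        · intro z hz v
          have h1 := inner_le_suppF (hint h0) hz v
          have h2 := (abs_le.1 (hNs v)).2
          linarith
      have h3 : volume (zonoid (empiricalMeasure xs N)) ≤ volume (S k₀) := measure_mono hsub
      have h4 := ENNReal.toReal_mono (hScomp k₀).measure_lt_top.ne h3
      linarith
    have hlower : ∀ᶠ N in atTop,
        r - ε/2 ≤ (volume (zonoid (empiricalMeasure xs N))).toReal := by
      rcases eq_or_ne (volume (zonoid μ)) 0 with h0 | h0
      · filter_upwards with N
        rw [hrdef, h0, ENNReal.toReal_zero]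
        have := ENNReal.toReal_nonneg (a := volume (zonoid (empiricalMeasure xs N)))
        linarith
      · have hKne : volume (closure (zonoid μ)) ≠ 0 := by rwa [hVK]
        have hint_ne : (interior (closure (zonoid μ))).Nonempty := by
          by_contra hie
          rw [Set.not_nonempty_iff_eq_empty] at hie
          have hsp : affineSpan ℝ (closure (zonoid μ)) ≠ ⊤ := by
            intro htop
            rw [← hKconv.interior_nonempty_iff_affineSpan_eq_top] at htop
            rw [hie] at htop
            exact Set.not_nonempty_empty htop
          apply hKne
          apply le_antisymm _ (zero_le)
          calc volume (closure (zonoid μ))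
              ≤ volume (affineSpan ℝ (closure (zonoid μ)) : Set (EuclideanSpace ℝ (Fin n))) :=
                measure_mono (subset_affineSpan ℝ _)
            _ = 0 := Measure.addHaar_affineSubspace volume _ hsp
        obtain ⟨x₀, hx₀⟩ := hint_ne
        obtain ⟨c, hcpos, hcball⟩ := Metric.isOpen_iff.1 isOpen_interior x₀ hx₀
        have hball : Metric.closedBall x₀ (c/2) ⊆ closure (zonoid μ) :=
          (Metric.closedBall_subset_ball (by linarith)).trans (hcball.trans interior_subset)
        have hsuppball : ∀ v : EuclideanSpace ℝ (Fin n),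
            ⟪v, x₀⟫ + (c/2) * ‖v‖ ≤ suppF μ v := by
          intro v
          rcases eq_or_ne v 0 with rfl | hv
          · rw [inner_zero_left, suppF_zero, norm_zero, mul_zero, add_zero]
          · have hnv : 0 < ‖v‖ := norm_pos_iff.2 hv
            have hp : x₀ + ((c/2) * ‖v‖⁻¹) • v ∈ closure (zonoid μ) := by
              apply hball
              rw [Metric.mem_closedBall, dist_comm, dist_eq_norm]
              have hxx : x₀ - (x₀ + ((c/2) * ‖v‖⁻¹) • v) = -(((c/2) * ‖v‖⁻¹) • v) := by abel
              rw [hxx, norm_neg, norm_smul, Real.norm_eq_abs, abs_of_pos (by positivity),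
                mul_assoc, inv_mul_cancel₀ hnv.ne', mul_one]
            have h5 := hKsub v _ hp
            rw [inner_add_right, real_inner_smul_right, real_inner_self_eq_norm_sq] at h5
            have hsq : (c/2) * ‖v‖⁻¹ * ‖v‖^2 = (c/2) * ‖v‖ := by
              field_simp
            linarith [h5, hsq.symm.le]
        set δ' : ℝ := min (1/2) (ε / (2 * ((n : ℝ) * r + 1))) with hδ'def
        have hδ'pos : 0 < δ' := by
          apply lt_min (by norm_num)
          apply div_pos hε
          positivity
        have hδ'le : δ' ≤ 1/2 := min_le_left _ _
        have hδ'le2 : (n : ℝ) * δ' * r ≤ ε/2 := by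
          have h1 : δ' ≤ ε / (2 * ((n : ℝ) * r + 1)) := min_le_right _ _
          have h2 : (0:ℝ) < 2 * ((n : ℝ) * r + 1) := by positivity
          have h5 : (0:ℝ) ≤ (n : ℝ) * r := by positivity
          have h6 : (n : ℝ) * r * δ' ≤ ((n : ℝ) * r) * (ε / (2 * ((n : ℝ) * r + 1))) :=
            mul_le_mul_of_nonneg_left h1 h5
          have h7 : ((n : ℝ) * r) * (ε / (2 * ((n : ℝ) * r + 1))) ≤ ε / 2 := by
            rw [← mul_div_assoc, div_le_div_iff₀ h2 (by norm_num : (0:ℝ) < 2)]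
            nlinarith [mul_nonneg h5 hε.le]
          calc (n : ℝ) * δ' * r = (n : ℝ) * r * δ' := by ring
            _ ≤ ε / 2 := h6.trans h7
        have hbern : r - ε/2 ≤ (1 - δ')^n * r := by
          have h1 : 1 + (n : ℝ) * (-δ') ≤ (1 + (-δ'))^n := one_add_mul_le_pow (by linarith) n
          have h2 : (1 - (n : ℝ) * δ') * r ≤ (1 - δ')^n * r := by
            apply mul_le_mul_of_nonneg_right _ hr0
            have h3 : 1 + (n : ℝ) * (-δ') = 1 - (n : ℝ) * δ' := by ring
            rw [h3] at h1
            have h4 : 1 + (-δ') = 1 - δ' := by ring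
            rwa [h4] at h1
          nlinarith [hδ'le2]
        have hρpos : 0 < δ' * (c/2) := by positivity
        filter_upwards [hunif _ hρpos, eventually_ne_atTop 0] with N hN h0'
        have hNs := hscale (empiricalMeasure xs N) _ hρpos.le hN
        have hsub : (fun y => δ' • x₀ + (1 - δ') • y) '' closure (zonoid μ)
            ⊆ closure (zonoid (empiricalMeasure xs N)) := by
          apply subset_of_inner_le (f := suppF (empiricalMeasure xs N))
            ((zonoid_convex (hint h0')).closure) isClosed_closure
          · intro v
            obtain ⟨z, hz, hez⟩ := exists_mem_zonoid_inner_eq (hint h0') v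
            exact ⟨z, subset_closure hz, hez.ge⟩
          · rintro z ⟨y, hy, rfl⟩ v
            rw [inner_add_right, real_inner_smul_right, real_inner_smul_right]
            have h1 : ⟪v, y⟫ ≤ suppF μ v := hKsub v y hy
            have h2 := hsuppball v
            have h3 := (abs_le.1 (hNs v)).1
            have e1 : δ' * (⟪v, x₀⟫ + (c/2) * ‖v‖) ≤ δ' * suppF μ v :=
              mul_le_mul_of_nonneg_left h2 hδ'pos.le
            have e2 : (1 - δ') * ⟪v, y⟫ ≤ (1 - δ') * suppF μ v :=
              mul_le_mul_of_nonneg_left h1 (by linarith)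
            linarith
        have hK'vol : volume ((fun y => δ' • x₀ + (1 - δ') • y) '' closure (zonoid μ))
            = ENNReal.ofReal ((1 - δ')^n) * volume (closure (zonoid μ)) := by
          have hset : (fun y => δ' • x₀ + (1 - δ') • y) '' closure (zonoid μ)
              = (δ' • x₀) +ᵥ ((1 - δ') • closure (zonoid μ)) := by
            ext w
            simp only [Set.mem_image, Set.mem_vadd_set, Set.mem_smul_set]
            constructor
            · rintro ⟨y, hy, rfl⟩
              exact ⟨(1 - δ') • y, ⟨y, hy, rfl⟩, rfl⟩
            · rintro ⟨w', ⟨y, hy, rfl⟩, rfl⟩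
              exact ⟨y, hy, rfl⟩
          rw [hset, measure_vadd, Measure.addHaar_smul]
          congr 1
          rw [finrank_euclideanSpace_fin]
          rw [abs_of_nonneg (pow_nonneg (by linarith) n)]
        have h5 : volume ((fun y => δ' • x₀ + (1 - δ') • y) '' closure (zonoid μ))
            ≤ volume (zonoid (empiricalMeasure xs N)) := by
          calc volume ((fun y => δ' • x₀ + (1 - δ') • y) '' closure (zonoid μ))
              ≤ volume (closure (zonoid (empiricalMeasure xs N))) := measure_mono hsub
            _ = volume (zonoid (empiricalMeasure xs N)) :=
                volume_closure_of_convex (zonoid_convex (hint h0'))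
        have hfinN : volume (zonoid (empiricalMeasure xs N)) ≠ ⊤ := by
          have hb := (zonoid_isBounded (hint h0')).isCompact_closure
          exact ((measure_mono subset_closure).trans_lt hb.measure_lt_top).ne
        have h6 := ENNReal.toReal_mono hfinN h5
        have h7 : (volume ((fun y => δ' • x₀ + (1 - δ') • y) '' closure (zonoid μ))).toReal
            = (1 - δ')^n * r := by
          rw [hK'vol, ENNReal.toReal_mul,
            ENNReal.toReal_ofReal (pow_nonneg (by linarith) n), hVK, hrdef]
        linarith
    filter_upwards [hupper, hlower] with N h1 h2
    rw [Real.dist_eq, abs_lt]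
    constructor <;> linarith
  -- conclusion
  constructor
  · exact eventually_atTop.1 hdeventually
  · have hgμ : gini μ = (volume (zonoid μ)).toReal / (∏ j, max ((∫ x, x ∂μ) j) 0) := by
      rw [gini, volume_parbox_toReal]
    have hgN : (fun N => gini (empiricalMeasure xs N))
        = fun N => (volume (zonoid (empiricalMeasure xs N))).toReal
            / (volume (parbox (∫ x, x ∂(empiricalMeasure xs N)))).toReal := rfl
    rw [hgμ, hgN]
    exact hrconv.div hdconv hdpos.ne'


end GiniAux

set_option maxHeartbeats 1000000 in
set_option synthInstance.maxHeartbeats 400000 in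
open GiniAux in
theorem gini_glivenko_cantelli {m : ℕ}
    {Ω : Type*} [MeasureSpace Ω] [IsProbabilityMeasure (ℙ : Measure Ω)]
    (X : ℕ → Ω → EuclideanSpace ℝ (Fin (m + 1))) (hXm : ∀ i, Measurable (X i))
    (hindep : iIndepFun X ℙ)
    (μ : Measure (EuclideanSpace ℝ (Fin (m + 1)))) [IsProbabilityMeasure μ]
    (hdist : ∀ i, Measure.map (X i) ℙ = μ)
    (hμint : Integrable (fun x => x) μ)
    (hsupp : μ (octant (m + 1))ᶜ = 0)
    (hpos : ∀ j, 0 < (∫ x, x ∂μ) j) :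
    ∀ᵐ ω ∂(ℙ : Measure Ω),
      (∃ N₀, ∀ N ≥ N₀,
        volume (parbox (∫ x, x ∂(empiricalMeasure (fun i => X i ω) N))) ≠ 0) ∧
      Tendsto (fun N => gini (empiricalMeasure (fun i => X i ω) N)) atTop
        (𝓝 (gini μ)) := by
  have hpair : Pairwise (Function.onFun (IndepFun · · ℙ) X) := fun i j hij => hindep.indepFun hij
  have hident : ∀ i, IdentDistrib (X i) (X 0) ℙ ℙ := fun i =>
    ⟨(hXm i).aemeasurable, (hXm 0).aemeasurable, by rw [hdist i, hdist 0]⟩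
  have hXint : Integrable (X 0) ℙ := by
    have h1 : Integrable ((fun x => x) ∘ (X 0)) ℙ := by
      rw [← integrable_map_measure (by rw [hdist 0]; exact hμint.1) (hXm 0).aemeasurable,
        hdist 0]
      exact hμint
    exact h1
  have hmean0 : ∫ ω, X 0 ω ∂ℙ = ∫ x, x ∂μ := by
    rw [← hdist 0]
    exact (integral_map (f := fun x : EuclideanSpace ℝ (Fin (m + 1)) => x)
      (hXm 0).aemeasurable stronglyMeasurable_id.aestronglyMeasurable).symm
  have A := strong_law_ae X hXint hpair hident
  have key : ∀ g : EuclideanSpace ℝ (Fin (m + 1)) → ℝ, Measurable g → Integrable g μ →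
      ∀ᵐ ω ∂(ℙ : Measure Ω), Tendsto
        (fun N : ℕ => (N : ℝ)⁻¹ • ∑ i ∈ Finset.range N, g (X i ω)) atTop
        (𝓝 (∫ x, g x ∂μ)) := by
    intro g hg hgint
    have h1 : Integrable (fun ω => g (X 0 ω)) ℙ := by
      have h2 : Integrable (g ∘ (X 0)) ℙ := by
        rw [← integrable_map_measure (by rw [hdist 0]; exact hgint.1) (hXm 0).aemeasurable,
          hdist 0]
        exact hgint
      exact h2
    have h2 : Pairwise (Function.onFun (IndepFun · · ℙ) (fun i ω => g (X i ω))) :=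
      fun i j hij => (hindep.indepFun hij).comp hg hg
    have h3 : ∀ i, IdentDistrib (fun ω => g (X i ω)) (fun ω => g (X 0 ω)) ℙ ℙ :=
      fun i => (hident i).comp hg
    have h4 := strong_law_ae (fun i ω => g (X i ω)) h1 h2 h3
    have h5 : ∫ ω, g (X 0 ω) ∂ℙ = ∫ x, g x ∂μ := by
      rw [← hdist 0, integral_map (hXm 0).aemeasurable]
      exact (hg.stronglyMeasurable.aestronglyMeasurable)
    rw [h5] at h4
    exact h4
  have hu : DenseRange (TopologicalSpace.denseSeq (EuclideanSpace ℝ (Fin (m + 1)))) :=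
    TopologicalSpace.denseRange_denseSeq _
  have hC : ∀ᵐ ω ∂(ℙ : Measure Ω), ∀ k, Tendsto
      (fun N : ℕ => (N : ℝ)⁻¹ • ∑ i ∈ Finset.range N,
        max ⟪TopologicalSpace.denseSeq (EuclideanSpace ℝ (Fin (m + 1))) k, X i ω⟫ 0) atTop
      (𝓝 (suppF μ (TopologicalSpace.denseSeq (EuclideanSpace ℝ (Fin (m + 1))) k))) := by
    rw [ae_all_iff]
    intro k
    exact key _ ((continuous_const.inner continuous_id).max continuous_const).measurable
      (integrable_posInner hμint _)
  have hB := key (fun x => ‖x‖) continuous_norm.measurable hμint.norm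
  filter_upwards [A, hB, hC] with ω hA hBω hCω
  have hmean' : Tendsto (fun N : ℕ => (N : ℝ)⁻¹ • ∑ i ∈ Finset.range N, X i ω) atTop
      (𝓝 (∫ x, x ∂μ)) := by
    rw [← hmean0]
    exact hA
  exact main_det μ hμint (fun i => X i ω) hmean' hBω _ hu hCω hpos
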